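/- arXiv:2509.09457 — 4 statements merged into one kernel-verified Lean document; each statement's English description precedes it below -/
import Mathlib

section
/- Let n ≥ 3 and let p be a prime with v_p(n) = e ≥ 1. Then there exist n-th-power-free integers a and a', both coprime to p, such that a ≡ a' (mod p^e), a ≢ a' (mod p^(e+1)), d_p(a) = e − 1, and d_p(a') = e. In particular, precision p^e on a does not determine d_p(a). -/
/-- An integer `a` is `n`-th-power-free if no prime `q` satisfies `q^n ∣ a`
(in particular `a ≠ 0` when `n ≥ 1`). -/
def NthPowerFree (n : ℕ) (a : ℤ) : Prop :=
  ∀ q : ℕ, q.Prime → ¬ ((q : ℤ) ^ n ∣ a)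

/-- The local invariant `d_p(a)`: for a prime `p` with `v_p(n) = e ≥ 1`,
`d_p(a) = min{v_p(a^(p−1) − 1) − 1, e}` if `p ∤ a` (with the convention `v_p(0) = ∞`,
so that the minimum equals `e` when `a^(p−1) = 1`), and `d_p(a) = −1` if `p ∣ a`. -/
noncomputable def dLocal (p e : ℕ) (a : ℤ) : ℤ :=
  if (p : ℤ) ∣ a then -1
  else if a ^ (p - 1) - 1 = 0 then (e : ℤ)
  else min ((padicValInt p (a ^ (p - 1) - 1) : ℤ) - 1) (e : ℤ)

lemma sq_dvd_pow_sub (x : ℤ) : ∀ m : ℕ, x ^ 2 ∣ (1 + x) ^ m - 1 - m * x := by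
  intro m
  induction m with
  | zero => simp
  | succ m ih =>
    obtain ⟨c, hc⟩ := ih
    have h : (1 + x) ^ m = 1 + m * x + x ^ 2 * c := by linarith
    refine ⟨(1 + x) * c + m, ?_⟩
    push_cast [pow_succ, h]
    ring

lemma padicValInt_eq_of_dvd_not_dvd (p : ℕ) (hp : p.Prime) {z : ℤ} {e : ℕ}
    (h1 : (p : ℤ) ^ e ∣ z) (h2 : ¬ (p : ℤ) ^ (e + 1) ∣ z) : padicValInt p z = e := by
  have : Fact p.Prime := ⟨hp⟩
  have hz : z ≠ 0 := by rintro rfl; exact h2 (dvd_zero _)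
  have hle : e ≤ padicValInt p z := by
    rcases (padicValInt_dvd_iff e z).mp h1 with h | h
    · exact absurd h hz
    · exact h
  have hge : padicValInt p z ≤ e := by
    by_contra h
    push_neg at h
    exact h2 ((pow_dvd_pow _ h).trans (padicValInt_dvd z))
  omega

lemma add_two_le_two_pow : ∀ n : ℕ, 2 ≤ n → n + 2 ≤ 2 ^ n := by
  intro n
  induction n with
  | zero => omega
  | succ k ih =>
    intro hk
    rcases Nat.lt_or_ge k 2 with h | h
    · interval_cases k <;> simp [pow_succ] <;> omega
    · have := ih h
      rw [pow_succ]; omega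

/-- Let `n ≥ 3` and let `p` be a prime with `v_p(n) = e ≥ 1`. Then there exist
`n`-th-power-free integers `a` and `a'`, both coprime to `p`, such that
`a ≡ a' (mod p^e)`, `a ≢ a' (mod p^(e+1))`, `d_p(a) = e − 1`, and `d_p(a') = e`.
In particular, precision `p^e` on `a` does not determine `d_p(a)`. -/
theorem exists_dLocal_jump (n : ℕ) (hn : 3 ≤ n) (p : ℕ) (hp : p.Prime)
    (e : ℕ) (he : padicValNat p n = e) (he1 : 1 ≤ e) :
    ∃ a a' : ℤ, NthPowerFree n a ∧ NthPowerFree n a' ∧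
      IsCoprime a (p : ℤ) ∧ IsCoprime a' (p : ℤ) ∧
      a ≡ a' [ZMOD (p : ℤ) ^ e] ∧ ¬ (a ≡ a' [ZMOD (p : ℤ) ^ (e + 1)]) ∧
      dLocal p e a = (e : ℤ) - 1 ∧ dLocal p e a' = (e : ℤ) := by
  have hp1 : 1 < p := hp.one_lt
  have hfact : Fact p.Prime := ⟨hp⟩
  -- p^e ≤ n
  have hpen : p ^ e ≤ n := by
    have hd : p ^ e ∣ n := he ▸ pow_padicValNat_dvd
    exact Nat.le_of_dvd (by omega) hd
  set x : ℤ := (p : ℤ) ^ e with hx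
  have hxpos : 0 < x := by positivity
  -- n-th power freeness of 1 + p^e
  have hfree : NthPowerFree n (1 + x) := by
    intro q hq hdvd
    have hle : (q : ℤ) ^ n ≤ 1 + x := Int.le_of_dvd (by linarith) hdvd
    have h2q : (2 : ℤ) ^ n ≤ (q : ℤ) ^ n := by
      apply pow_le_pow_left₀ (by norm_num)
      exact_mod_cast hq.two_le
    have hxn : x ≤ (n : ℤ) := by
      rw [hx]
      exact_mod_cast hpen
    have h2n : ((n : ℤ) + 2 : ℤ) ≤ 2 ^ n := by
      have := add_two_le_two_pow n (by omega)
      exact_mod_cast this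
    linarith
  have hfree1 : NthPowerFree n 1 := by
    intro q hq hdvd
    have hle : (q : ℤ) ^ n ≤ 1 := Int.le_of_dvd one_pos hdvd
    have h2q : (2 : ℤ) ^ n ≤ (q : ℤ) ^ n := by
      apply pow_le_pow_left₀ (by norm_num)
      exact_mod_cast hq.two_le
    have : (8 : ℤ) ≤ 2 ^ n := by
      calc (8 : ℤ) = 2 ^ 3 := by norm_num
      _ ≤ 2 ^ n := pow_le_pow_right₀ (by norm_num) hn
    linarith
  -- coprimality
  have hcop : IsCoprime (1 + x) (p : ℤ) := by
    refine ⟨1, -((p : ℤ) ^ (e - 1)), ?_⟩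
    have : (p : ℤ) ^ (e - 1) * (p : ℤ) = x := by
      rw [hx, ← pow_succ]
      congr 1
      omega
    linarith
  -- key valuation facts
  set m : ℕ := p - 1 with hm
  set D : ℤ := (1 + x) ^ m - 1 with hD
  obtain ⟨c, hc⟩ := sq_dvd_pow_sub x m
  have hDeq : D = (m : ℤ) * x + x ^ 2 * c := by rw [hD]; linarith
  have hxx : x ^ 2 = (p : ℤ) ^ (2 * e) := by rw [hx, ← pow_mul, mul_comm]
  have h1 : (p : ℤ) ^ e ∣ D := by
    rw [hDeq]
    exact dvd_add (Dvd.dvd.mul_left dvd_rfl _) (by rw [hxx]; exact Dvd.dvd.mul_right (pow_dvd_pow _ (by omega)) _)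
  have hpm : ¬ (p : ℤ) ∣ (m : ℤ) := by
    rw [Int.natCast_dvd_natCast]
    intro h
    have := Nat.le_of_dvd (by omega) h
    omega
  have h2 : ¬ (p : ℤ) ^ (e + 1) ∣ D := by
    intro h
    have hsq : (p : ℤ) ^ (e + 1) ∣ x ^ 2 * c := by
      rw [hxx]
      exact Dvd.dvd.mul_right (pow_dvd_pow _ (by omega)) _
    have hmx : (p : ℤ) ^ (e + 1) ∣ (m : ℤ) * x := by
      have : (m : ℤ) * x = D - x ^ 2 * c := by linarith
      rw [this]
      exact dvd_sub h hsq
    rw [hx, pow_succ, mul_comm ((m : ℤ))] at hmx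
    have hne : (p : ℤ) ^ e ≠ 0 := by positivity
    have : (p : ℤ) ∣ (m : ℤ) := (mul_dvd_mul_iff_left hne).mp hmx
    exact hpm this
  have hDne : D ≠ 0 := fun h => h2 (h ▸ dvd_zero _)
  have hval : padicValInt p D = e := padicValInt_eq_of_dvd_not_dvd p hp h1 h2
  -- not p ∣ 1 + x
  have hp1' : ¬ (p : ℤ) ∣ 1 := by
    intro h
    have := Int.le_of_dvd one_pos h
    have : p ≤ 1 := by exact_mod_cast this
    omega
  have hnd : ¬ (p : ℤ) ∣ (1 + x) := by
    intro h
    have hpx : (p : ℤ) ∣ x := hx ▸ dvd_pow_self _ (by omega)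
    have h1' : (p : ℤ) ∣ 1 := by
      have := dvd_sub h hpx
      simpa using this
    exact hp1' h1'
  refine ⟨1 + x, 1, hfree, hfree1, hcop, isCoprime_one_left, ?_, ?_, ?_, ?_⟩
  · rw [Int.modEq_iff_dvd]
    have : (1 : ℤ) - (1 + x) = -x := by ring
    rw [this, hx]
    exact (dvd_neg).mpr dvd_rfl
  · rw [Int.modEq_iff_dvd]
    intro h
    have heq : (1 : ℤ) - (1 + x) = -x := by ring
    rw [heq, dvd_neg, hx, pow_succ] at h
    have hne : (p : ℤ) ^ e ≠ 0 := by positivity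
    have hcontra : (p : ℤ) ∣ 1 := by
      have h' : (p : ℤ) ^ e * (p : ℤ) ∣ (p : ℤ) ^ e * 1 := by simpa using h
      exact (mul_dvd_mul_iff_left hne).mp h'
    exact hp1' hcontra
  · rw [dLocal, if_neg hnd, if_neg (by rw [← hm, ← hD]; exact hDne)]
    rw [show (1 + x) ^ (p - 1) - 1 = D by rw [hD, hm], hval]
    omega
  · rw [dLocal, if_neg hp1', if_pos (by simp)]
end

section
/- Let n ≥ 3, let p be a prime with v_p(n) = e ≥ 1, and let N ≥ 1 be an integer with the property that for all n-th-power-free integers a, a' coprime to p with a ≡ a' (mod N) one has d_p(a) = d_p(a'). Then p^(e+1) divides N. -/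
/-- Let `n ≥ 3`, let `p` be a prime with `v_p(n) = e ≥ 1`, and let `N ≥ 1` be
an integer with the property that for all `n`-th-power-free integers `a, a'` coprime to `p`
with `a ≡ a' (mod N)` one has `d_p(a) = d_p(a')`. Then `p^(e+1)` divides `N`. -/
theorem pow_succ_dvd_of_period (n : ℕ) (hn : 3 ≤ n) (p : ℕ) (hp : p.Prime)
    (e : ℕ) (he : padicValNat p n = e) (he1 : 1 ≤ e) (N : ℕ) (hN : 1 ≤ N)
    (hper : ∀ a a' : ℤ, NthPowerFree n a → NthPowerFree n a' →
      IsCoprime a (p : ℤ) → IsCoprime a' (p : ℤ) → a ≡ a' [ZMOD (N : ℤ)] →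
      dLocal p e a = dLocal p e a') :
    p ^ (e + 1) ∣ N := by
  by_contra hdvd
  have hp2 : 2 ≤ p := hp.two_le
  have hNne : N ≠ 0 := by omega
  set f := N.factorization p with hf
  have hfe : f ≤ e := by
    by_contra hfe
    exact hdvd ((Nat.Prime.pow_dvd_iff_le_factorization hp hNne).mpr (by omega))
  set M := N / p ^ f with hM
  have hNfM : p ^ f * M = N := Nat.ordProj_mul_ordCompl_eq_self N p
  have hpM : ¬ p ∣ M := Nat.not_dvd_ordCompl hp hNne
  have hMne : M ≠ 0 := by
    intro h; rw [h, mul_zero] at hNfM; omega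
  have hcoP : Nat.Coprime p M := (Nat.Prime.coprime_iff_not_dvd hp).mpr hpM
  have hco : Nat.Coprime (p ^ (e + 1)) M := hcoP.pow_left _
  haveI : NeZero (p ^ (e + 1) * M) :=
    ⟨Nat.mul_ne_zero (pow_ne_zero _ (by omega)) hMne⟩
  set crt := ZMod.chineseRemainder hco with hcrt
  -- the target residue pair
  have hu1 : IsUnit (((1 + p ^ e : ℕ) : ZMod (p ^ (e + 1)))) := by
    haveI : NeZero (p ^ (e + 1)) := ⟨pow_ne_zero _ (by omega)⟩
    rw [ZMod.isUnit_iff_coprime]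
    apply Nat.Coprime.pow_right
    have hpd : ¬ p ∣ 1 + p ^ e := by
      intro h
      have hpe : p ∣ p ^ e := dvd_pow_self p (by omega)
      have h1d : p ∣ 1 := (Nat.dvd_add_right hpe).mp (by rwa [Nat.add_comm] at h)
      have := Nat.le_of_dvd Nat.one_pos h1d
      omega
    exact Nat.coprime_comm.mp ((Nat.Prime.coprime_iff_not_dvd hp).mpr hpd)
  have hu2 : IsUnit ((1 : ZMod M)) := isUnit_one
  have hupair : IsUnit ((((1 + p ^ e : ℕ) : ZMod (p ^ (e + 1))), (1 : ZMod M)) :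
      ZMod (p ^ (e + 1)) × ZMod M) := by
    obtain ⟨u, hu⟩ := hu1
    obtain ⟨v, hv⟩ := hu2
    exact ⟨⟨(u, v), ((u⁻¹ : _), (v⁻¹ : _)), by simp [Prod.ext_iff], by simp [Prod.ext_iff]⟩,
      by simp [hu, hv]⟩
  set c : ZMod (p ^ (e + 1) * M) :=
    crt.symm (((1 + p ^ e : ℕ) : ZMod (p ^ (e + 1))), (1 : ZMod M)) with hc
  have hunit : IsUnit c := hupair.map crt.symm.toRingHom
  obtain ⟨x, hx1, hxp, hxc⟩ := Nat.forall_exists_prime_gt_and_eq_mod hunit 1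
  -- extract the two component congruences
  have hpair := congrArg crt hxc
  rw [hc, RingEquiv.apply_symm_apply, map_natCast] at hpair
  have h1 : (x : ZMod (p ^ (e + 1))) = ((1 + p ^ e : ℕ) : ZMod (p ^ (e + 1))) := by
    have := congrArg Prod.fst hpair
    simpa using this
  have h2 : (x : ZMod M) = 1 := by
    have := congrArg Prod.snd hpair
    simpa using this
  set X : ℤ := (x : ℤ) with hX
  have hd1 : ((p : ℤ)) ^ (e + 1) ∣ X - 1 - (p : ℤ) ^ e := by
    have h0 : ((X - 1 - (p : ℤ) ^ e : ℤ) : ZMod (p ^ (e + 1))) = 0 := by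
      push_cast [hX]
      rw [show ((x : ℕ) : ZMod (p ^ (e + 1))) = _ from h1]
      push_cast
      ring
    have := (ZMod.intCast_zmod_eq_zero_iff_dvd _ _).mp h0
    exact_mod_cast this
  have hd2 : (M : ℤ) ∣ X - 1 := by
    have h0 : ((X - 1 : ℤ) : ZMod M) = 0 := by
      push_cast [hX]
      rw [show ((x : ℕ) : ZMod M) = _ from h2]
      ring
    exact_mod_cast (ZMod.intCast_zmod_eq_zero_iff_dvd _ _).mp h0
  have hpe : (p : ℤ) ^ e ∣ X - 1 := by
    have h' : (p : ℤ) ^ e ∣ X - 1 - (p : ℤ) ^ e :=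
      dvd_trans (pow_dvd_pow _ (by omega)) hd1
    have := dvd_add h' (dvd_refl ((p : ℤ) ^ e))
    simpa using this
  have hpe1 : ¬ (p : ℤ) ^ (e + 1) ∣ X - 1 := by
    intro hcon
    have hdd : (p : ℤ) ^ (e + 1) ∣ (p : ℤ) ^ e := by
      have := dvd_sub hcon hd1
      simpa using this
    have hle := Int.le_of_dvd (by positivity) hdd
    have hlt : (p : ℤ) ^ e < (p : ℤ) ^ (e + 1) :=
      pow_lt_pow_right₀ (by exact_mod_cast hp.one_lt) (by omega)
    omega
  have hp1 : (p : ℤ) ∣ X - 1 := dvd_trans (dvd_pow_self _ (by omega)) hpe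
  have hpx : ¬ (p : ℤ) ∣ X := by
    intro hcX
    have : (p : ℤ) ∣ 1 := by
      have := dvd_sub hcX hp1
      simpa using this
    have := Int.le_of_dvd one_pos this
    have : (2 : ℤ) ≤ p := by exact_mod_cast hp2
    omega
  have hprimeZ : Prime (p : ℤ) := Nat.prime_iff_prime_int.mp hp
  have hN1 : (N : ℤ) ∣ X - 1 := by
    have hcopZ : IsCoprime ((p : ℤ) ^ f) (M : ℤ) :=
      IsCoprime.pow_left ((hprimeZ.coprime_iff_not_dvd).mpr (by exact_mod_cast hpM))
    have := hcopZ.mul_dvd (dvd_trans (pow_dvd_pow _ hfe) hpe) hd2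
    have hcast : ((N : ℕ) : ℤ) = (p : ℤ) ^ f * (M : ℤ) := by
      rw [← hNfM]; push_cast; ring
    rwa [hcast]
  have hmod : (1 : ℤ) ≡ X [ZMOD (N : ℤ)] := Int.modEq_iff_dvd.mpr hN1
  -- geometric sum and valuation
  set S : ℤ := ∑ i ∈ Finset.range (p - 1), X ^ i with hS
  have hgeom : S * (X - 1) = X ^ (p - 1) - 1 := geom_sum_mul X (p - 1)
  have hpS : ¬ (p : ℤ) ∣ S := by
    intro hdv
    haveI : NeZero p := ⟨by omega⟩
    have h0 : ((S : ℤ) : ZMod p) = 0 := (ZMod.intCast_zmod_eq_zero_iff_dvd _ _).mpr hdv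
    have hX1 : ((X : ℤ) : ZMod p) = 1 := by
      have h0' : ((X - 1 : ℤ) : ZMod p) = 0 := (ZMod.intCast_zmod_eq_zero_iff_dvd _ _).mpr hp1
      push_cast at h0'
      exact sub_eq_zero.mp h0'
    have hcomp : ((S : ℤ) : ZMod p) = ((p - 1 : ℕ) : ZMod p) := by
      rw [hS]
      push_cast
      simp [hX1]
    rw [h0] at hcomp
    have : p ∣ p - 1 := (ZMod.natCast_eq_zero_iff _ _).mp hcomp.symm
    have := Nat.le_of_dvd (by omega) this
    omega
  have hze : (p : ℤ) ^ e ∣ X ^ (p - 1) - 1 := by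
    rw [← hgeom]
    exact Dvd.dvd.mul_left hpe S
  have hze1 : ¬ (p : ℤ) ^ (e + 1) ∣ X ^ (p - 1) - 1 := by
    intro hcdvd
    rw [← hgeom] at hcdvd
    have hcop : IsCoprime ((p : ℤ) ^ (e + 1)) S :=
      IsCoprime.pow_left ((hprimeZ.coprime_iff_not_dvd).mpr hpS)
    exact hpe1 (hcop.dvd_of_dvd_mul_left hcdvd)
  have hne0 : X ^ (p - 1) - 1 ≠ 0 := by
    intro h
    exact hze1 (h ▸ dvd_zero _)
  haveI : Fact p.Prime := ⟨hp⟩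
  have hval : padicValInt p (X ^ (p - 1) - 1) = e := by
    rcases (padicValInt_dvd_iff e (X ^ (p - 1) - 1)).mp hze with h | h
    · exact absurd h hne0
    · have hB : ¬ (X ^ (p - 1) - 1 = 0 ∨ e + 1 ≤ padicValInt p (X ^ (p - 1) - 1)) := by
        intro hor
        exact hze1 ((padicValInt_dvd_iff _ _).mpr hor)
      push_neg at hB
      omega
  -- evaluate dLocal
  have d1 : dLocal p e 1 = (e : ℤ) := by
    rw [dLocal, if_neg, if_pos (by simp)]
    intro hdp
    have := Int.le_of_dvd one_pos hdp
    have : (2 : ℤ) ≤ p := by exact_mod_cast hp2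
    omega
  have dX : dLocal p e X = (e : ℤ) - 1 := by
    rw [dLocal, if_neg hpx, if_neg hne0, hval]
    omega
  -- power-freeness
  have hfree1 : NthPowerFree n 1 := by
    intro q hq hdq
    rcases Int.isUnit_iff.mp (isUnit_of_dvd_one hdq) with h | h
    · have : (q : ℕ) ^ n = 1 := by exact_mod_cast h
      have := hq.two_le
      have hqn : 2 ^ n ≤ q ^ n := Nat.pow_le_pow_left this n
      have : 8 ≤ 2 ^ n := by
        calc (8 : ℕ) = 2 ^ 3 := by norm_num
        _ ≤ 2 ^ n := Nat.pow_le_pow_right (by omega) hn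
      omega
    · have hpos : (0 : ℤ) ≤ (q : ℤ) ^ n := by positivity
      omega
  have hfreeX : NthPowerFree n X := by
    intro q hq hdq
    have hdn : q ^ n ∣ x := by
      rw [hX] at hdq
      exact_mod_cast hdq
    have hqx : q ∣ x := dvd_trans (dvd_pow_self q (by omega)) hdn
    have hqeq : q = x := (Nat.prime_dvd_prime_iff_eq hq hxp).mp hqx
    subst hqeq
    have hle := Nat.le_of_dvd (by omega) hdn
    have hlt : q ^ 1 < q ^ n := Nat.pow_lt_pow_right hq.one_lt (by omega)
    simp at hlt
    omega
  have hcopX : IsCoprime X (p : ℤ) :=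
    ((hprimeZ.coprime_iff_not_dvd).mpr hpx).symm
  have := hper 1 X hfree1 hfreeX isCoprime_one_left hcopX hmod
  rw [d1, dX] at this
  omega
end

section
/- Let n ≥ 3 and set M(n) = n·rad(n). If a and a' are integers with a ≡ a' (mod M(n)), then for every prime p dividing n one has d_p(a) = d_p(a') and k_{p,m}(a) = k_{p,m}(a') for all 1 ≤ m ≤ n−1. That is, the full collection of local denominator data at all primes dividing n is periodic in a with period M(n). -/
/-- The radical of `n`: the product of the distinct primes dividing `n`. -/
def radical (n : ℕ) : ℕ := ∏ p ∈ n.primeFactors, p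

open Classical in
/-- The denominator exponent `k_{p,m}(a)`: the largest integer `k` with `0 ≤ k ≤ d_p(a)`
and `m ≥ n − n/p^k`, and `0` if no such `k` exists. -/
noncomputable def kExp (n p e : ℕ) (a : ℤ) (m : ℕ) : ℕ :=
  ((Finset.range (e + 1)).filter
      (fun k : ℕ => (k : ℤ) ≤ dLocal p e a ∧ n - n / p ^ k ≤ m)).sup id

lemma aux_min_eq (p : ℕ) (hp : p.Prime) (e : ℕ) (x y : ℤ)
    (hd : ((p : ℤ)) ^ (e + 1) ∣ (x - y)) :
    (if x = 0 then (e : ℤ) else min ((padicValInt p x : ℤ) - 1) e) =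
    (if y = 0 then (e : ℤ) else min ((padicValInt p y : ℤ) - 1) e) := by
  haveI : Fact p.Prime := ⟨hp⟩
  have key : ∀ u v : ℤ, u ≠ 0 → v ≠ 0 → ((p : ℤ)) ^ (e + 1) ∣ (u - v) →
      min ((padicValInt p u : ℤ) - 1) e ≤ min ((padicValInt p v : ℤ) - 1) e := by
    intro u v hu hv hdvd
    by_cases h : padicValInt p u ≤ e
    · -- u's valuation ≤ e; show v has valuation ≥ that of u
      have h1 : ((p : ℤ)) ^ (padicValInt p u) ∣ u := padicValInt_dvd u
      have h2 : ((p : ℤ)) ^ (padicValInt p u) ∣ (u - v) :=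
        dvd_trans (pow_dvd_pow _ (by omega)) hdvd
      have h3 : ((p : ℤ)) ^ (padicValInt p u) ∣ v := (dvd_sub_right h1).mp h2
      have h4 : padicValInt p u ≤ padicValInt p v := by
        rcases (padicValInt_dvd_iff _ v).mp h3 with h | h
        · exact absurd h hv
        · exact h
      have : ((padicValInt p u : ℤ)) ≤ (padicValInt p v : ℤ) := by exact_mod_cast h4
      exact le_min (le_trans (min_le_left _ _) (by omega)) (min_le_right _ _)
    · -- valuation of u ≥ e + 1, so min is e ... need valuation of v ≥ e+1 too? No:
      -- min ((v_p u) - 1) e = e, need ≤ min side: show e ≤ min((v_p v)-1) e,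
      -- i.e. v_p v ≥ e+1. Since p^{e+1} ∣ u and p^{e+1} ∣ u - v.
      have h1 : ((p : ℤ)) ^ (e + 1) ∣ u := by
        rw [padicValInt_dvd_iff]; right; omega
      have h3 : ((p : ℤ)) ^ (e + 1) ∣ v := (dvd_sub_right h1).mp hdvd
      have h4 : e + 1 ≤ padicValInt p v := by
        rcases (padicValInt_dvd_iff _ v).mp h3 with h' | h'
        · exact absurd h' hv
        · exact h'
      have : (e : ℤ) + 1 ≤ (padicValInt p v : ℤ) := by exact_mod_cast h4
      exact le_min (le_trans (min_le_right _ _) (by omega)) (min_le_right _ _)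
  by_cases hx : x = 0 <;> by_cases hy : y = 0
  · simp [hx, hy]
  · -- x = 0, y ≠ 0 : p^{e+1} ∣ y
    subst hx
    have h3 : ((p : ℤ)) ^ (e + 1) ∣ y := by
      have := (dvd_neg).mpr hd; simpa using this
    have h4 : e + 1 ≤ padicValInt p y := by
      rcases (padicValInt_dvd_iff _ y).mp h3 with h' | h'
      · exact absurd h' hy
      · exact h'
    have : (e : ℤ) + 1 ≤ (padicValInt p y : ℤ) := by exact_mod_cast h4
    simp only [if_pos rfl, if_neg hy]
    exact (min_eq_right (by omega)).symm
  · subst hy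
    have h3 : ((p : ℤ)) ^ (e + 1) ∣ x := by simpa using hd
    have h4 : e + 1 ≤ padicValInt p x := by
      rcases (padicValInt_dvd_iff _ x).mp h3 with h' | h'
      · exact absurd h' hx
      · exact h'
    have : (e : ℤ) + 1 ≤ (padicValInt p x : ℤ) := by exact_mod_cast h4
    simp only [if_pos rfl, if_neg hx]
    exact min_eq_right (by omega)
  · simp only [if_neg hx, if_neg hy]
    exact le_antisymm (key x y hx hy hd) (key y x hy hx (by
      have := (dvd_neg).mpr hd; simpa using this))

/-- Let `n ≥ 3` and set `M(n) = n·rad(n)`. If `a` and `a'` are integers with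
`a ≡ a' (mod M(n))`, then for every prime `p` dividing `n` one has `d_p(a) = d_p(a')` and
`k_{p,m}(a) = k_{p,m}(a')` for all `1 ≤ m ≤ n−1`: the full collection of local denominator
data at all primes dividing `n` is periodic in `a` with period `M(n)`. -/
theorem shape_periodic_mod_M (n : ℕ) (hn : 3 ≤ n) (a a' : ℤ)
    (hmod : a ≡ a' [ZMOD ((n * radical n : ℕ) : ℤ)]) :
    ∀ p : ℕ, p.Prime → p ∣ n →
      dLocal p (padicValNat p n) a = dLocal p (padicValNat p n) a' ∧
      ∀ m : ℕ, 1 ≤ m → m ≤ n - 1 →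
        kExp n p (padicValNat p n) a m = kExp n p (padicValNat p n) a' m := by
  intro p hp hpn
  haveI : Fact p.Prime := ⟨hp⟩
  have hn0 : n ≠ 0 := by omega
  set e := padicValNat p n with he
  -- M := n * radical n divides a - a'
  have hM : ((n * radical n : ℕ) : ℤ) ∣ (a' - a) := Int.ModEq.dvd hmod
  -- p^(e+1) ∣ n * radical n
  have hpe : p ^ e ∣ n := pow_padicValNat_dvd
  have hprad : p ∣ radical n := Finset.dvd_prod_of_mem _
    (Nat.mem_primeFactors.mpr ⟨hp, hpn, hn0⟩)
  have hpow : p ^ (e + 1) ∣ n * radical n := by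
    rw [pow_succ]
    exact mul_dvd_mul hpe hprad
  have hpowZ : ((p : ℤ)) ^ (e + 1) ∣ (a' - a) := by
    refine dvd_trans ?_ hM
    exact_mod_cast Int.natCast_dvd_natCast.mpr hpow
  have hpowZ' : ((p : ℤ)) ^ (e + 1) ∣ (a - a') := by
    have := (dvd_neg).mpr hpowZ; simpa using this
  -- p ∣ a ↔ p ∣ a'
  have hpa : (p : ℤ) ∣ a ↔ (p : ℤ) ∣ a' := by
    have hpd : (p : ℤ) ∣ (a - a') :=
      dvd_trans (dvd_pow_self _ (Nat.succ_ne_zero e)) hpowZ'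
    constructor
    · intro h; exact (dvd_sub_right h).mp (by simpa using hpd)
    · intro h; exact (dvd_sub_left h).mp hpd
  have hd : dLocal p e a = dLocal p e a' := by
    unfold dLocal
    by_cases h : (p : ℤ) ∣ a
    · rw [if_pos h, if_pos (hpa.mp h)]
    · rw [if_neg h, if_neg (fun h' => h (hpa.mpr h'))]
      have hdvd : ((p : ℤ)) ^ (e + 1) ∣ ((a ^ (p - 1) - 1) - (a' ^ (p - 1) - 1)) := by
        have := sub_dvd_pow_sub_pow a a' (p - 1)
        have h2 : ((p : ℤ)) ^ (e + 1) ∣ (a ^ (p - 1) - a' ^ (p - 1)) :=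
          dvd_trans hpowZ' this
        simpa using h2
      exact aux_min_eq p hp e _ _ hdvd
  refine ⟨hd, fun m _ _ => ?_⟩
  unfold kExp
  rw [hd]
end

section
/- Let n ≥ 3 and let N ≥ 1 be an integer with the property that for all n-th-power-free integers a, a' with a ≡ a' (mod N) one has d_p(a) = d_p(a') for every prime p dividing n. Then M(n) = n·rad(n) divides N. In other words, n·rad(n) is the minimal period of the local data (d_p)_{p | n}. -/
/-!
Suppose `p ^ (v_p n + 1) ∤ N` for some prime `p ∣ n`. Dirichlet's theorem then gives a squarefree
`a ≡ 1 (mod N)` with `d_p(a) ≠ d_p(1) = v_p n`. If `p ∤ N`, take `a = p q` with `q` a prime inverse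
to `p` modulo `N`, so that `d_p(a) = -1`. If `p ∣ N`, take a prime `a ≡ 1 + N (mod p N)`: then
`v_p(a - 1) = v_p N ≤ v_p n`, and since `v_p(a ^ (p - 1) - 1) = v_p(a - 1)` we get
`d_p(a) = v_p N - 1`. So `p ^ (v_p n + 1) ∣ N` for every `p ∣ n`, and the product of these pairwise
coprime prime powers is `n · rad n`.
-/

theorem Squarefree.nthPowerFree {n : ℕ} (hn : 2 ≤ n) {a : ℤ} (ha : Squarefree a) :
    NthPowerFree n a := by
  intro q hq hdvd
  have hsq : (q : ℤ) * q ∣ a := (pow_two (q : ℤ) ▸ pow_dvd_pow _ hn).trans hdvd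
  exact (Nat.prime_iff_prime_int.mp hq).not_isUnit (ha _ hsq)

theorem dLocal_of_dvd (p e : ℕ) {a : ℤ} (h : (p : ℤ) ∣ a) : dLocal p e a = -1 := if_pos h

theorem dLocal_one {p : ℕ} (hp : p.Prime) (e : ℕ) : dLocal p e 1 = e := by
  rw [dLocal, if_neg (by exact_mod_cast hp.not_dvd_one), if_pos (by simp)]

theorem padicValInt_pow_pred_sub_one {p : ℕ} (hp : p.Prime) {a : ℤ} (h : (p : ℤ) ∣ a - 1) :
    padicValInt p (a ^ (p - 1) - 1) = padicValInt p (a - 1) := by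
  have : Fact p.Prime := ⟨hp⟩
  have hp' : Prime (p : ℤ) := Nat.prime_iff_prime_int.mp hp
  rcases eq_or_ne (a - 1) 0 with ha | ha
  · rw [sub_eq_zero.mp ha, one_pow]
  have hpa : ¬ (p : ℤ) ∣ a := fun hpa => hp'.not_dvd_one (by simpa using dvd_sub hpa h)
  have hpp : ¬ (p : ℤ) ∣ ((p - 1 : ℕ) : ℤ) := by
    rw [Nat.cast_sub hp.one_le, Nat.cast_one, dvd_sub_right dvd_rfl]
    exact hp'.not_dvd_one
  have hsum := not_dvd_geom_sum₂ hp' (y := 1) h hpa hpp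
  have hfac := geom_sum₂_mul a 1 (p - 1)
  rw [one_pow] at hfac
  rw [← hfac, padicValInt.mul (by rintro h0; exact hsum (h0 ▸ dvd_zero _)) ha,
    padicValInt.eq_zero_of_not_dvd hsum, zero_add]

theorem dLocal_of_dvd_sub_one {p : ℕ} (hp : p.Prime) (e : ℕ) {a : ℤ} (h : (p : ℤ) ∣ a - 1)
    (ha : a ≠ 1) : dLocal p e a = min ((padicValInt p (a - 1) : ℤ) - 1) e := by
  have : Fact p.Prime := ⟨hp⟩
  have hpa : ¬ (p : ℤ) ∣ a := fun hpa =>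
    (Nat.prime_iff_prime_int.mp hp).not_dvd_one (by simpa using dvd_sub hpa h)
  have hval : padicValInt p (a - 1) ≠ 0 := by
    simp [hp.ne_one, sub_ne_zero.mpr ha, h]
  have hne : a ^ (p - 1) - 1 ≠ 0 := fun h0 => hval <| by
    rw [← padicValInt_pow_pred_sub_one hp h, h0, padicValInt.zero]
  rw [dLocal, if_neg hpa, if_neg hne, padicValInt_pow_pred_sub_one hp h]

theorem padicValInt_eq_of_modEq_mul {p : ℕ} (hp : p.Prime) {x y : ℤ} (hy : y ≠ 0)
    (h : x ≡ y [ZMOD p * y]) : padicValInt p x = padicValInt p y := by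
  have : Fact p.Prime := ⟨hp⟩
  obtain ⟨k, hk⟩ := h.symm.dvd
  have hx : x = y * (1 + p * k) := by linear_combination hk
  have hpk : ¬ (p : ℤ) ∣ 1 + p * k := fun hd =>
    (Nat.prime_iff_prime_int.mp hp).not_dvd_one ((dvd_add_left (dvd_mul_right _ _)).mp hd)
  have hpk0 : 1 + (p : ℤ) * k ≠ 0 := fun h0 => hpk (h0 ▸ dvd_zero _)
  rw [hx, padicValInt.mul hy hpk0, padicValInt.eq_zero_of_not_dvd hpk, add_zero]

theorem exists_squarefree_modEq_one_of_not_dvd {p N : ℕ} (hp : p.Prime) (hpN : ¬ p ∣ N) :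
    ∃ a : ℤ, Squarefree a ∧ a ≡ 1 [ZMOD N] ∧ (p : ℤ) ∣ a := by
  have hN : N ≠ 0 := by rintro rfl; exact hpN (dvd_zero p)
  obtain ⟨u, v, huv⟩ : IsCoprime (p : ℤ) N :=
    Nat.isCoprime_iff_coprime.mpr ((hp.coprime_iff_not_dvd).mpr hpN)
  obtain ⟨q, hqp, hq, hqu⟩ :=
    Nat.forall_exists_prime_gt_and_zmodEq p (a := u) hN ⟨p, v, by linear_combination huv⟩
  refine ⟨(p * q : ℕ), ?_, ?_, by push_cast; exact dvd_mul_right _ _⟩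
  · rw [Int.squarefree_natCast, Nat.squarefree_mul ((Nat.coprime_primes hp hq).mpr hqp.ne)]
    exact ⟨hp.prime.squarefree, hq.prime.squarefree⟩
  · calc ((p * q : ℕ) : ℤ) = p * q := by push_cast; rfl
      _ ≡ p * u [ZMOD N] := hqu.mul_left _
      _ = 1 + N * (-v) := by linear_combination huv
      _ ≡ 1 [ZMOD N] := Int.modEq_add_fac_self

theorem exists_prime_modEq_one_padicValInt_sub_one {p N : ℕ} (hp : p.Prime) (hN : N ≠ 0)
    (hpN : p ∣ N) :
    ∃ a : ℤ, Prime a ∧ a ≡ 1 [ZMOD N] ∧ padicValInt p (a - 1) = padicValNat p N := by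
  obtain ⟨k, hk⟩ := hpN
  have hcop : IsCoprime (1 + N : ℤ) (p * N : ℕ) := ⟨1 - N, k, by push_cast [hk]; ring⟩
  obtain ⟨q, -, hq, hqmod⟩ :=
    Nat.forall_exists_prime_gt_and_zmodEq 0 (mul_ne_zero hp.ne_zero hN) hcop
  push_cast at hqmod
  refine ⟨q, Nat.prime_iff_prime_int.mp hq, ?_, ?_⟩
  · exact (hqmod.of_mul_left p).trans Int.add_modEq_right
  · rw [← padicValInt.of_nat]
    exact padicValInt_eq_of_modEq_mul hp (by exact_mod_cast hN) (by simpa using hqmod.sub_right 1)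

theorem pow_succ_dvd_of_dLocal_eq {p e N : ℕ} (hp : p.Prime)
    (h : ∀ a : ℤ, Squarefree a → a ≡ 1 [ZMOD N] → dLocal p e a = e) : p ^ (e + 1) ∣ N := by
  by_contra hdvd
  have hN : N ≠ 0 := by rintro rfl; exact hdvd (dvd_zero _)
  by_cases hpN : p ∣ N
  · obtain ⟨a, ha, haN, hval⟩ := exists_prime_modEq_one_padicValInt_sub_one hp hN hpN
    have hle : padicValNat p N ≤ e := by
      by_contra! hlt
      exact hdvd ((pow_dvd_pow p hlt).trans pow_padicValNat_dvd)
    have hpa : (p : ℤ) ∣ a - 1 := (Int.natCast_dvd_natCast.mpr hpN).trans haN.symm.dvd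
    have := h a ha.squarefree haN
    rw [dLocal_of_dvd_sub_one hp e hpa ha.ne_one, hval] at this
    omega
  · obtain ⟨a, ha, haN, hpa⟩ := exists_squarefree_modEq_one_of_not_dvd hp hpN
    have := h a ha haN
    rw [dLocal_of_dvd p e hpa] at this
    omega

theorem mul_radical_dvd {n N : ℕ} (hn : n ≠ 0)
    (h : ∀ p ∈ n.primeFactors, p ^ (n.factorization p + 1) ∣ N) : n * radical n ∣ N := by
  have hprod : n * radical n = ∏ p ∈ n.primeFactors, p ^ (n.factorization p + 1) := by
    simp only [pow_succ, Finset.prod_mul_distrib, radical,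
      ← Nat.prod_primeFactors_pow_factorization hn]
  rw [hprod]
  refine Finset.prod_dvd_of_isRelPrime (fun p hp q hq hpq => ?_) h
  exact Nat.coprime_iff_isRelPrime.mp <| Nat.coprime_pow_primes _ _
    (Nat.prime_of_mem_primeFactors hp) (Nat.prime_of_mem_primeFactors hq) hpq

theorem M_dvd_of_period_general (n : ℕ) (hn : 3 ≤ n) (N : ℕ)
    (hper : ∀ a a' : ℤ, NthPowerFree n a → NthPowerFree n a' → a ≡ a' [ZMOD (N : ℤ)] →
      ∀ p : ℕ, p.Prime → p ∣ n →
        dLocal p (padicValNat p n) a = dLocal p (padicValNat p n) a') :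
    n * radical n ∣ N := by
  refine mul_radical_dvd (by omega) fun p hpn => ?_
  have hp := Nat.prime_of_mem_primeFactors hpn
  rw [Nat.factorization_def n hp]
  refine pow_succ_dvd_of_dLocal_eq hp fun a ha haN => ?_
  rw [← hper 1 a (squarefree_one.nthPowerFree (by omega)) (ha.nthPowerFree (by omega)) haN.symm
    p hp (Nat.dvd_of_mem_primeFactors hpn), dLocal_one hp]

/-- Let `n ≥ 3` and let `N ≥ 1` be an integer with the property that for all
`n`-th-power-free integers `a, a'` with `a ≡ a' (mod N)` one has `d_p(a) = d_p(a')` for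
every prime `p` dividing `n`. Then `M(n) = n·rad(n)` divides `N`: `n·rad(n)` is the minimal
period of the local data `(d_p)_{p ∣ n}`. -/
theorem M_dvd_of_period (n : ℕ) (hn : 3 ≤ n) (N : ℕ) (hN : 1 ≤ N)
    (hper : ∀ a a' : ℤ, NthPowerFree n a → NthPowerFree n a' → a ≡ a' [ZMOD (N : ℤ)] →
      ∀ p : ℕ, p.Prime → p ∣ n →
        dLocal p (padicValNat p n) a = dLocal p (padicValNat p n) a') :
    n * radical n ∣ N :=
  M_dvd_of_period_general n hn N hper
end
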